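/- Upper bound of Proposition 6.1: for every probability measure ν on {∘,•}^ℤ and every realization (B_n)_n of model B with B_0 ∼ ν (i.e., B_{n+1} = ℬ(B_n, U_n) with i.i.d. uniform updates independent of B_0), one has P(B_{0,n} = •) ≤ d_n = 4^{−n} C(2n+1,n) for every n ∈ ℕ. Equivalently, for every realization (A_n)_n of model A with arbitrary initial distribution, P(A_{0,n}A_{1,n} ∈ {00,11}) ≤ d_n. -/

import Mathlib

open MeasureTheory ProbabilityTheory
open scoped ENNReal

/-!
Conventions: a configuration of model A is `x : ℤ → Bool` (`false` = 0, `true` = 1);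
a configuration of model B is `y : ℤ → Bool` (`false` = ∘, `true` = •);
an update is `u : ℤ → Bool` (`true` = ↑, `false` = →).
-/

/-- The local map `𝒜` of model A. -/
def modelA (x u : ℤ → Bool) : ℤ → Bool := fun i =>
  if x (i - 1) = x i then xor (x i) (u i) else x (i - 1)

/-- The local map `ℬ` of model B: the `i`-th coordinate of `ℬ(y,u)` is `•` iff
`(y_{i-1}y_i, u_{i-1}u_i) ∈ {(•∘, →⋅), (∘•, ⋅↑), (••, ↑↑), (••, →→)}`. -/
def modelB (y u : ℤ → Bool) : ℤ → Bool := fun i =>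
  match y (i - 1), y i with
  | true, false => !u (i - 1)
  | false, true => u i
  | true, true => u (i - 1) == u i
  | false, false => false

set_option linter.unusedSectionVars false


/-- Binomial coefficient with integer lower index, zero for negative index. -/
def binom (m : ℕ) (z : ℤ) : ℕ := if 0 ≤ z then m.choose z.toNat else 0

lemma binom_neg {m : ℕ} {z : ℤ} (h : z < 0) : binom m z = 0 := by
  simp [binom, not_le.mpr h]

lemma binom_pascal (m : ℕ) (z : ℤ) : binom (m + 1) z = binom m z + binom m (z - 1) := by
  rcases lt_or_ge z 0 with h | h
  · rw [binom_neg h, binom_neg h, binom_neg (by omega)]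
  · rcases eq_or_lt_of_le h with h0 | h0
    · rw [← h0]; simp [binom]
    · have h1 : (0:ℤ) ≤ z - 1 := by omega
      simp only [binom, if_pos h, if_pos h1]
      have e : z.toNat = (z-1).toNat + 1 := by omega
      rw [e, Nat.choose_succ_succ, Nat.add_comm]

lemma binom_two_step (m : ℕ) (z : ℤ) :
    binom (m + 2) z = binom m z + 2 * binom m (z - 1) + binom m (z - 2) := by
  have h1 := binom_pascal (m + 1) z
  rw [show m + 1 + 1 = m + 2 by omega] at h1
  have h2 := binom_pascal m z
  have h3 := binom_pascal m (z - 1)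
  rw [show z - 1 - 1 = z - 2 by ring] at h3
  omega

lemma choose_mono_le (t : ℕ) : ∀ s r : ℕ, r ≤ s → s ≤ t →
    Nat.choose (2 * t) r ≤ Nat.choose (2 * t) s := by
  intro s
  induction s with
  | zero => intro r h1 _; rw [Nat.le_zero.mp h1]
  | succ s ih =>
    intro r h1 h2
    rcases Nat.lt_or_ge r (s + 1) with h' | h'
    · exact (ih r (by omega) (by omega)).trans (Nat.choose_le_succ_of_lt_half_left (by omega))
    · have : r = s + 1 := by omega
      subst this; exact le_rfl

lemma binom_mono (t : ℕ) (z : ℤ) (hz : z ≤ t) : binom (2 * t) (z - 2) ≤ binom (2 * t) z := by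
  rcases lt_or_ge (z - 2) 0 with h2 | h2
  · rw [binom_neg h2]; exact Nat.zero_le _
  · have h : (0:ℤ) ≤ z := by omega
    obtain ⟨k, rfl⟩ := Int.eq_ofNat_of_zero_le h
    have hk2 : ((k : ℤ) - 2).toNat = k - 2 := by omega
    simp only [binom, if_pos h, if_pos h2, hk2, Int.toNat_natCast]
    exact choose_mono_le t k (k - 2) (by omega) (by omega)

lemma binom_symm (t : ℕ) : binom (2 * t) ((t : ℤ) + 1) = binom (2 * t) ((t : ℤ) - 1) := by
  cases t with
  | zero => simp [binom]
  | succ t =>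
    have h1 : (0:ℤ) ≤ ((t+1 : ℕ) : ℤ) + 1 := by positivity
    have h2 : (0:ℤ) ≤ ((t+1 : ℕ) : ℤ) - 1 := by push_cast; omega
    simp only [binom, if_pos h1, if_pos h2]
    have e1 : (((t+1:ℕ) : ℤ) + 1).toNat = (t+1) + 1 := by push_cast; omega
    have e2 : (((t+1:ℕ) : ℤ) - 1).toNat = t := by push_cast; omega
    rw [e1, e2, ← Nat.choose_symm (by omega : (t+1) + 1 ≤ 2 * (t+1))]
    congr 1
    omega

/-- The absorbed-walk weight. -/
def Nw (t k : ℕ) : ℕ := binom (2 * t) ((t : ℤ) - k) - binom (2 * t) ((t : ℤ) - k - 2)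

lemma Nw_cast (t k : ℕ) :
    (Nw t k : ℤ) = (binom (2 * t) ((t : ℤ) - k) : ℤ) - binom (2 * t) ((t : ℤ) - k - 2) := by
  have := binom_mono t ((t : ℤ) - k) (by omega)
  simp only [Nw]
  omega

lemma Nw_zero_zero : Nw 0 0 = 1 := by simp [Nw, binom]

private lemma key2 (t : ℕ) : ∀ z : ℤ, (binom (2 * (t+1)) z : ℤ)
    = binom (2*t) z + 2 * binom (2*t) (z - 1) + binom (2*t) (z - 2) := by
  intro z
  have h := binom_two_step (2 * t) z
  rw [show 2*t+2 = 2*(t+1) by ring] at h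
  push_cast [h]; ring

lemma Nw_step_pos (t k : ℕ) : Nw (t + 1) (k + 1) = Nw t k + 2 * Nw t (k + 1) + Nw t (k + 2) := by
  have goal : (Nw (t + 1) (k + 1) : ℤ) = (Nw t k : ℤ) + 2 * Nw t (k+1) + Nw t (k+2) := by
    rw [Nw_cast, Nw_cast, Nw_cast, Nw_cast,
        show ((t+1:ℕ):ℤ) - ((k+1:ℕ):ℤ) = (t:ℤ)-k by push_cast; ring,
        show ((t:ℤ)) - ((k+1:ℕ):ℤ) = (t:ℤ)-k-1 by push_cast; ring,
        show ((t:ℤ)) - ((k+2:ℕ):ℤ) = (t:ℤ)-k-2 by push_cast; ring]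
    have h1 := key2 t ((t:ℤ) - k)
    have h2 := key2 t ((t:ℤ) - k - 2)
    rw [show (t:ℤ)-k-2-1 = (t:ℤ)-k-3 by ring, show (t:ℤ)-k-2-2 = (t:ℤ)-k-4 by ring] at h2
    rw [show (t:ℤ)-k-1-2 = (t:ℤ)-k-3 by ring, show (t:ℤ)-k-2-2 = (t:ℤ)-k-4 by ring]
    omega
  exact_mod_cast goal

lemma Nw_step_zero (t : ℕ) : Nw (t + 1) 0 = 2 * Nw t 0 + Nw t 1 := by
  have goal : (Nw (t + 1) 0 : ℤ) = 2 * (Nw t 0 : ℤ) + Nw t 1 := by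
    rw [Nw_cast, Nw_cast, Nw_cast,
        show ((t+1:ℕ):ℤ) - ((0:ℕ):ℤ) = (t:ℤ)+1 by push_cast; ring,
        show ((t:ℤ)) - ((0:ℕ):ℤ) = (t:ℤ) by push_cast; ring,
        show ((t:ℤ)) - ((1:ℕ):ℤ) = (t:ℤ)-1 by push_cast; ring]
    have h1 := key2 t ((t:ℤ) + 1)
    have h2 := key2 t ((t:ℤ) - 1)
    have hs := binom_symm t
    rw [show (t:ℤ)+1-1 = (t:ℤ) by ring, show (t:ℤ)+1-2 = (t:ℤ)-1 by ring] at h1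
    rw [show (t:ℤ)-1-1 = (t:ℤ)-2 by ring, show (t:ℤ)-1-2 = (t:ℤ)-3 by ring] at h2
    rw [show (t:ℤ)+1-2 = (t:ℤ)-1 by ring, show (t:ℤ)-1-2 = (t:ℤ)-3 by ring]
    omega
  exact_mod_cast goal

lemma Nw_sum (n : ℕ) : ∑ k ∈ Finset.range (n+1), Nw n k = Nat.choose (2*n+1) n := by
  have tele : ∀ T : ℕ, (∑ k ∈ Finset.range (T+1), (Nw n k : ℤ))
      = binom (2*n) ((n:ℤ)) + binom (2*n) ((n:ℤ)-1)
        - binom (2*n) ((n:ℤ)-T-1) - binom (2*n) ((n:ℤ)-T-2) := by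
    intro T
    induction T with
    | zero =>
      rw [Finset.sum_range_one, Nw_cast,
          show ((n:ℤ)) - ((0:ℕ):ℤ) = (n:ℤ) by push_cast; ring]
      ring
    | succ T ih =>
      rw [Finset.sum_range_succ, ih, Nw_cast,
          show (n:ℤ) - ((T+1:ℕ):ℤ) - 1 = (n:ℤ)-T-2 by push_cast; ring,
          show (n:ℤ) - ((T+1:ℕ):ℤ) - 2 = (n:ℤ)-T-3 by push_cast; ring,
          show ((n:ℤ)) - ((T+1:ℕ):ℤ) = (n:ℤ)-T-1 by push_cast; ring]
      ring
  have h := tele n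
  rw [binom_neg (show (n:ℤ)-n-1 < 0 by omega), binom_neg (show (n:ℤ)-n-2 < 0 by omega)] at h
  have hfin : (binom (2*n) ((n:ℤ)) : ℤ) + binom (2*n) ((n:ℤ)-1) = Nat.choose (2*n+1) n := by
    cases n with
    | zero => simp [binom]
    | succ m =>
      have h1 : (0:ℤ) ≤ ((m+1:ℕ):ℤ) := by positivity
      have h2 : (0:ℤ) ≤ ((m+1:ℕ):ℤ) - 1 := by push_cast; omega
      simp only [binom, if_pos h1, if_pos h2]
      have e1 : (((m+1:ℕ)):ℤ).toNat = m+1 := by push_cast; omega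
      have e2 : (((m+1:ℕ):ℤ) - 1).toNat = m := by push_cast; omega
      rw [e1, e2]
      have : Nat.choose (2*(m+1)+1) (m+1) = Nat.choose (2*(m+1)) m + Nat.choose (2*(m+1)) (m+1) := by
        rw [show 2*(m+1)+1 = (2*(m+1))+1 by ring]
        exact Nat.choose_succ_succ (2*(m+1)) m
      omega
  have : (∑ k ∈ Finset.range (n+1), (Nw n k : ℤ)) = ((∑ k ∈ Finset.range (n+1), Nw n k : ℕ) : ℤ) := by
    push_cast; ring
  omega

def lrW (j : ℤ) (n : ℕ) (u : ℤ × ℕ → Bool) : ℕ → ℤ × ℤ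
  | 0 => (j, j)
  | t + 1 =>
      ((lrW j n u t).1 - (if u ((lrW j n u t).1 - 1, n - 1 - t) then 0 else 1),
       (lrW j n u t).2 - (if u ((lrW j n u t).2, n - 1 - t) then 0 else 1))

lemma lrW_bound (j : ℤ) (n : ℕ) (u : ℤ × ℕ → Bool) :
    ∀ t : ℕ, j - t ≤ (lrW j n u t).1 ∧ (lrW j n u t).1 ≤ j ∧
      j - t ≤ (lrW j n u t).2 ∧ (lrW j n u t).2 ≤ j := by
  intro t
  induction t with
  | zero => simp [lrW]
  | succ t ih =>
    simp only [lrW]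
    push_cast
    split <;> split <;> omega

lemma lrW_congr (j : ℤ) (n : ℕ) (u u' : ℤ × ℕ → Bool) (t : ℕ) (ht : t ≤ n)
    (h : ∀ i m, j - t ≤ i → i ≤ j → n - t ≤ m → m ≤ n - 1 → u (i, m) = u' (i, m)) :
    ∀ s, s ≤ t → lrW j n u s = lrW j n u' s := by
  intro s
  induction s with
  | zero => intro _; rfl
  | succ s ih =>
    intro hs
    have hih := ih (by omega)
    have hb := lrW_bound j n u s
    simp only [lrW, hih]
    have h1 : u ((lrW j n u' s).1 - 1, n - 1 - s) = u' ((lrW j n u' s).1 - 1, n - 1 - s) := by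
      have hb' := lrW_bound j n u' s
      exact h _ _ (by omega) (by omega) (by omega) (by omega)
    have h2 : u ((lrW j n u' s).2, n - 1 - s) = u' ((lrW j n u' s).2, n - 1 - s) := by
      have hb' := lrW_bound j n u' s
      exact h _ _ (by omega) (by omega) (by omega) (by omega)
    rw [h1, h2]

section Core

variable {Ω : Type*} [MeasurableSpace Ω]

/-- The event that the exploration survives up to backward time `t` with endpoints `a, b`. -/
def Fset (V : ℤ × ℕ → Ω → Bool) (j : ℤ) (n t : ℕ) (a b : ℤ) : Set Ω :=
  {ω | (∀ s, s ≤ t → (lrW j n (fun p => V p ω) s).1 ≤ (lrW j n (fun p => V p ω) s).2)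
     ∧ (lrW j n (fun p => V p ω) t).1 = a ∧ (lrW j n (fun p => V p ω) t).2 = b}

noncomputable def Sfin (j : ℤ) (n t : ℕ) : Finset (ℤ × ℕ) :=
  (Finset.Icc (j - t) j) ×ˢ (Finset.Icc (n - t) (n - 1))

lemma Fset_congr {V : ℤ × ℕ → Ω → Bool} {j : ℤ} {n t : ℕ} (ht : t ≤ n) {a b : ℤ} {ω ω' : Ω}
    (h : ∀ p ∈ Sfin j n t, V p ω = V p ω') (hω : ω ∈ Fset V j n t a b) :
    ω' ∈ Fset V j n t a b := by
  have hc : ∀ s, s ≤ t → lrW j n (fun p => V p ω) s = lrW j n (fun p => V p ω') s := by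
    refine lrW_congr j n _ _ t ht ?_
    intro i m h1 h2 h3 h4
    exact h (i, m) (by simp [Sfin, Finset.mem_product, Finset.mem_Icc]; omega)
  obtain ⟨hall, hL, hR⟩ := hω
  refine ⟨fun s hs => ?_, ?_, ?_⟩
  · rw [← hc s hs]; exact hall s hs
  · rw [← hc t le_rfl]; exact hL
  · rw [← hc t le_rfl]; exact hR

lemma Fset_eq_preimage (V : ℤ × ℕ → Ω → Bool) (j : ℤ) {n t : ℕ} (ht : t ≤ n) (a b : ℤ) :
    Fset V j n t a b = (fun ω (p : ↥(Sfin j n t)) => V (↑p : ℤ × ℕ) ω) ⁻¹'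
      ((fun ω (p : ↥(Sfin j n t)) => V (↑p : ℤ × ℕ) ω) '' (Fset V j n t a b)) := by
  apply subset_antisymm (Set.subset_preimage_image _ _)
  rintro ω' ⟨ω, hω, hgeq⟩
  exact Fset_congr ht (fun p hp => congrFun hgeq ⟨p, hp⟩) hω

lemma Fset_measurableSet {V : ℤ × ℕ → Ω → Bool} (hVmeas : ∀ p, Measurable (V p))
    (j : ℤ) {n t : ℕ} (ht : t ≤ n) (a b : ℤ) :
    MeasurableSet (Fset V j n t a b) := by
  rw [Fset_eq_preimage V j ht a b]
  have hg : Measurable (fun ω (p : ↥(Sfin j n t)) => V (↑p : ℤ × ℕ) ω) :=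
    measurable_pi_lambda _ (fun p => hVmeas p)
  exact hg ((Set.toFinite _).measurableSet)

lemma Fset_empty_of_not_le {V : ℤ × ℕ → Ω → Bool} {j : ℤ} {n t : ℕ} {a b : ℤ}
    (hab : b < a) : Fset V j n t a b = ∅ := by
  ext ω
  simp only [Fset, Set.mem_setOf_eq, Set.mem_empty_iff_false, iff_false, not_and]
  intro hall hL hR
  have := hall t le_rfl
  omega

lemma Fset_empty_of_big {V : ℤ × ℕ → Ω → Bool} {j : ℤ} {n t : ℕ} {a b : ℤ}
    (hab : a + t < b) : Fset V j n t a b = ∅ := by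
  ext ω
  simp only [Fset, Set.mem_setOf_eq, Set.mem_empty_iff_false, iff_false, not_and]
  intro hall hL hR
  have := lrW_bound j n (fun p => V p ω) t
  omega

lemma measure_V_eq (P : Measure Ω) [IsProbabilityMeasure P] {V : ℤ × ℕ → Ω → Bool}
    (hVmeas : ∀ p, Measurable (V p)) (hVunif : ∀ p, P {ω | V p ω = true} = 1 / 2)
    (p : ℤ × ℕ) (ξ : Bool) : P {ω | V p ω = ξ} = 1 / 2 := by
  cases ξ
  · have hset : {ω | V p ω = false} = {ω | V p ω = true}ᶜ := by
      ext ω; simp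
    have hms : MeasurableSet {ω | V p ω = true} := hVmeas p (measurableSet_singleton true)
    rw [hset, prob_compl_eq_one_sub hms, hVunif]
    exact ENNReal.sub_eq_of_eq_add (by norm_num) (ENNReal.add_halves 1).symm
  · exact hVunif p

lemma indep_step (P : Measure Ω) [IsProbabilityMeasure P] {V : ℤ × ℕ → Ω → Bool}
    (hVmeas : ∀ p, Measurable (V p))
    (hVindep : iIndepFun V P)
    (hVunif : ∀ p, P {ω | V p ω = true} = 1 / 2)
    (j : ℤ) {n t : ℕ} (ht : t < n) (a b : ℤ) (ξ η : Bool) :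
    P (Fset V j n t a b ∩ ({ω | V (a - 1, n - 1 - t) ω = ξ} ∩ {ω | V (b, n - 1 - t) ω = η}))
      = P (Fset V j n t a b) * (1 / 4) := by
  rcases lt_or_ge b a with hab | hab
  · rw [Fset_empty_of_not_le hab]
    simp
  · have hne : ((a - 1, n - 1 - t) : ℤ × ℕ) ≠ (b, n - 1 - t) := by
      simp only [ne_eq, Prod.mk.injEq, not_and]
      intro h; omega
    set T : Finset (ℤ × ℕ) := {(a - 1, n - 1 - t), (b, n - 1 - t)} with hT
    have hdisj : Disjoint (Sfin j n t) T := by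
      rw [Finset.disjoint_left]
      intro p hp hpT
      simp only [Sfin, Finset.mem_product, Finset.mem_Icc] at hp
      have hp2 : n - t ≤ p.2 := hp.2.1
      have : p.2 = n - 1 - t := by
        simp only [hT, Finset.mem_insert, Finset.mem_singleton] at hpT
        rcases hpT with h | h <;> rw [h]
      omega
    have hindep := hVindep.indepFun_finset (Sfin j n t) T hdisj hVmeas
    have hmem1 : ((a - 1, n - 1 - t) : ℤ × ℕ) ∈ T := by simp [hT]
    have hmem2 : ((b, n - 1 - t) : ℤ × ℕ) ∈ T := by simp [hT]
    set N : Set (↥T → Bool) :=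
      {v | v ⟨(a - 1, n - 1 - t), hmem1⟩ = ξ ∧ v ⟨(b, n - 1 - t), hmem2⟩ = η} with hN
    have hNpre : (fun ω (p : ↥T) => V (↑p : ℤ × ℕ) ω) ⁻¹' N
        = ({ω | V (a - 1, n - 1 - t) ω = ξ} ∩ {ω | V (b, n - 1 - t) ω = η}) := rfl
    have hMmeas : MeasurableSet ((fun ω (p : ↥(Sfin j n t)) => V (↑p : ℤ × ℕ) ω) ''
        (Fset V j n t a b)) := (Set.toFinite _).measurableSet
    have hNmeas : MeasurableSet N := (Set.toFinite _).measurableSet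
    have := hindep.measure_inter_preimage_eq_mul _ _ hMmeas hNmeas
    rw [← Fset_eq_preimage V j (le_of_lt ht) a b, hNpre] at this
    rw [this]
    congr 1
    -- P (A ∩ B) = 1/4
    have hpair := (hVindep.indepFun hne).measure_inter_preimage_eq_mul
      {ξ} {η} (measurableSet_singleton ξ) (measurableSet_singleton η)
    have hpre1 : V (a - 1, n - 1 - t) ⁻¹' {ξ} = {ω | V (a - 1, n - 1 - t) ω = ξ} := rfl
    have hpre2 : V (b, n - 1 - t) ⁻¹' {η} = {ω | V (b, n - 1 - t) ω = η} := rfl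
    rw [hpre1, hpre2] at hpair
    rw [hpair, measure_V_eq P hVmeas hVunif _ ξ, measure_V_eq P hVmeas hVunif _ η]
    simp only [one_div]
    rw [← ENNReal.mul_inv (Or.inl (by norm_num)) (Or.inl (by norm_num))]
    norm_num

end Core

section Core2
variable {Ω : Type*} [MeasurableSpace Ω]

lemma Fset_mem_succ {V : ℤ × ℕ → Ω → Bool} {j : ℤ} {n t : ℕ} (a₀ b₀ : ℤ) (ξ η : Bool) (ω : Ω)
    (hω : ω ∈ Fset V j n t a₀ b₀)
    (hξ : V (a₀ - 1, n - 1 - t) ω = ξ) (hη : V (b₀, n - 1 - t) ω = η)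
    (hle : a₀ - (if ξ then 0 else 1) ≤ b₀ - (if η then 0 else 1)) :
    ω ∈ Fset V j n (t + 1) (a₀ - (if ξ then 0 else 1)) (b₀ - (if η then 0 else 1)) := by
  obtain ⟨hall, hL, hR⟩ := hω
  have h1 : (lrW j n (fun p => V p ω) (t + 1)).1 = a₀ - (if ξ then 0 else 1) := by
    simp only [lrW, hL, hξ]
  have h2 : (lrW j n (fun p => V p ω) (t + 1)).2 = b₀ - (if η then 0 else 1) := by
    simp only [lrW, hR, hη]
  refine ⟨?_, h1, h2⟩
  intro s hs
  rcases eq_or_lt_of_le hs with he | hlt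
  · rw [he, h1, h2]; exact hle
  · exact hall s (by omega)

lemma Fset_succ_cases {V : ℤ × ℕ → Ω → Bool} {j : ℤ} {n t : ℕ} {a b : ℤ} {ω : Ω}
    (hω : ω ∈ Fset V j n (t + 1) a b) :
    ∃ a₀ b₀ : ℤ, ∃ ξ η : Bool, ω ∈ Fset V j n t a₀ b₀ ∧
      V (a₀ - 1, n - 1 - t) ω = ξ ∧ V (b₀, n - 1 - t) ω = η ∧
      a = a₀ - (if ξ then 0 else 1) ∧ b = b₀ - (if η then 0 else 1) := by
  obtain ⟨hall, hL, hR⟩ := hω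
  refine ⟨(lrW j n (fun p => V p ω) t).1, (lrW j n (fun p => V p ω) t).2,
    V ((lrW j n (fun p => V p ω) t).1 - 1, n - 1 - t) ω,
    V ((lrW j n (fun p => V p ω) t).2, n - 1 - t) ω,
    ⟨fun s hs => hall s (by omega), rfl, rfl⟩, rfl, rfl, ?_, ?_⟩
  · rw [← hL]; simp only [lrW]
  · rw [← hR]; simp only [lrW]

lemma Fset_succ_measure (P : Measure Ω) [IsProbabilityMeasure P] {V : ℤ × ℕ → Ω → Bool}
    (hVmeas : ∀ p, Measurable (V p))
    (hVindep : iIndepFun V P)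
    (hVunif : ∀ p, P {ω | V p ω = true} = 1 / 2)
    (j : ℤ) {n t : ℕ} (ht : t < n) (a b : ℤ) (hab : a ≤ b) :
    P (Fset V j n (t + 1) a b) = (P (Fset V j n t a b) + P (Fset V j n t (a + 1) b)
      + P (Fset V j n t a (b + 1)) + P (Fset V j n t (a + 1) (b + 1))) * (1 / 4) := by
  classical
  set P1 := Fset V j n t a b ∩ ({ω | V (a - 1, n - 1 - t) ω = true} ∩ {ω | V (b, n - 1 - t) ω = true}) with hP1
  set P2 := Fset V j n t (a + 1) b ∩
    ({ω | V (a + 1 - 1, n - 1 - t) ω = false} ∩ {ω | V (b, n - 1 - t) ω = true}) with hP2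
  set P3 := Fset V j n t a (b + 1) ∩
    ({ω | V (a - 1, n - 1 - t) ω = true} ∩ {ω | V (b + 1, n - 1 - t) ω = false}) with hP3
  set P4 := Fset V j n t (a + 1) (b + 1) ∩
    ({ω | V (a + 1 - 1, n - 1 - t) ω = false} ∩ {ω | V (b + 1, n - 1 - t) ω = false}) with hP4
  have hdecomp : Fset V j n (t + 1) a b = P1 ∪ P2 ∪ P3 ∪ P4 := by
    ext ω
    constructor
    · intro hω
      obtain ⟨a₀, b₀, ξ, η, hmem, hξ, hη, ha, hb⟩ := Fset_succ_cases hω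
      cases ξ <;> cases η <;> simp only [if_true, if_false, Bool.false_eq_true] at ha hb
      · -- ξ = false, η = false : a₀ = a+1, b₀ = b+1 : P4
        right
        have ha' : a₀ = a + 1 := by omega
        have hb' : b₀ = b + 1 := by omega
        subst ha'; subst hb'
        exact ⟨hmem, hξ, hη⟩
      · -- ξ = false, η = true : a₀ = a+1, b₀ = b : P2
        left; left; right
        have ha' : a₀ = a + 1 := by omega
        have hb' : b₀ = b := by omega
        subst ha'; subst hb'
        exact ⟨hmem, hξ, hη⟩
      · -- ξ = true, η = false : P3
        left; right
        have ha' : a₀ = a := by omega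
        have hb' : b₀ = b + 1 := by omega
        subst ha'; subst hb'
        exact ⟨hmem, hξ, hη⟩
      · -- ξ = true, η = true : P1
        left; left; left
        have ha' : a₀ = a := by omega
        have hb' : b₀ = b := by omega
        subst ha'; subst hb'
        exact ⟨hmem, hξ, hη⟩
    · intro hω
      rcases hω with ((⟨hmem, hξ, hη⟩ | ⟨hmem, hξ, hη⟩) | ⟨hmem, hξ, hη⟩) | ⟨hmem, hξ, hη⟩
      · have := Fset_mem_succ a b true true ω hmem hξ hη (by simp; omega)
        simpa using this
      · have := Fset_mem_succ (a + 1) b false true ω hmem hξ hη (by simp; omega)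
        simpa using this
      · have := Fset_mem_succ a (b + 1) true false ω hmem hξ hη (by simp; omega)
        simpa using this
      · have := Fset_mem_succ (a + 1) (b + 1) false false ω hmem hξ hη (by simp; omega)
        simpa using this
  have hmeas : ∀ (a₀ b₀ : ℤ) (ξ η : Bool),
      MeasurableSet (Fset V j n t a₀ b₀ ∩ ({ω | V (a₀ - 1, n - 1 - t) ω = ξ} ∩ {ω | V (b₀, n - 1 - t) ω = η})) := by
    intro a₀ b₀ ξ η
    exact (Fset_measurableSet hVmeas j (le_of_lt ht) a₀ b₀).inter
      (((hVmeas _) (measurableSet_singleton ξ)).inter ((hVmeas _) (measurableSet_singleton η)))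
  have hdLNe : ∀ {a₀ b₀ a₁ b₁ : ℤ}, (a₀ ≠ a₁ ∨ b₀ ≠ b₁) →
      ∀ (s₀ s₁ : Set Ω), Disjoint (Fset V j n t a₀ b₀ ∩ s₀) (Fset V j n t a₁ b₁ ∩ s₁) := by
    intro a₀ b₀ a₁ b₁ hne s₀ s₁
    rw [Set.disjoint_left]
    rintro ω ⟨⟨_, hL0, hR0⟩, _⟩ ⟨⟨_, hL1, hR1⟩, _⟩
    rcases hne with h | h <;> omega
  have hP2meas : MeasurableSet P2 := hmeas (a + 1) b false true
  have hP3meas : MeasurableSet P3 := hmeas a (b + 1) true false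
  have hP4meas : MeasurableSet P4 := hmeas (a + 1) (b + 1) false false
  rw [hdecomp]
  rw [measure_union ?hd4 hP4meas, measure_union ?hd3 hP3meas, measure_union ?hd2 hP2meas]
  case hd2 => exact hdLNe (Or.inl (by omega)) _ _
  case hd3 =>
    apply Set.disjoint_union_left.mpr
    exact ⟨hdLNe (Or.inr (by omega)) _ _, hdLNe (Or.inl (by omega)) _ _⟩
  case hd4 =>
    apply Set.disjoint_union_left.mpr
    refine ⟨Set.disjoint_union_left.mpr ⟨?_, ?_⟩, ?_⟩
    · exact hdLNe (Or.inl (by omega)) _ _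
    · exact hdLNe (Or.inr (by omega)) _ _
    · exact hdLNe (Or.inl (by omega)) _ _
  have e1 := indep_step P hVmeas hVindep hVunif j ht a b true true
  have e2 := indep_step P hVmeas hVindep hVunif j ht (a + 1) b false true
  have e3 := indep_step P hVmeas hVindep hVunif j ht a (b + 1) true false
  have e4 := indep_step P hVmeas hVindep hVunif j ht (a + 1) (b + 1) false false
  rw [hP1, hP2, hP3, hP4, e1, e2, e3, e4]
  ring

end Core2

section Core3
variable {Ω : Type*} [MeasurableSpace Ω]

/-- The "survival with width `k`" mass at backward time `t`. -/
noncomputable def qfun (P : Measure Ω) (V : ℤ × ℕ → Ω → Bool) (j : ℤ) (n t k : ℕ) : ℝ≥0∞ :=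
  ∑' a : ℤ, P (Fset V j n t a (a + (k : ℤ)))

lemma tsum_shift (f : ℤ → ℝ≥0∞) : ∑' a : ℤ, f (a + 1) = ∑' a : ℤ, f a :=
  (Equiv.addRight (1 : ℤ)).tsum_eq f

lemma Fset_zero_self (V : ℤ × ℕ → Ω → Bool) (j : ℤ) (n : ℕ) :
    Fset V j n 0 j j = Set.univ := by
  ext ω
  simp only [Fset, Set.mem_setOf_eq, Set.mem_univ, iff_true]
  refine ⟨fun s hs => ?_, rfl, rfl⟩
  rw [Nat.le_zero.mp hs]
  exact le_rfl

lemma Fset_zero_ne (V : ℤ × ℕ → Ω → Bool) (j : ℤ) (n : ℕ) {a b : ℤ} (h : ¬(a = j)) :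
    Fset V j n 0 a b = ∅ := by
  ext ω
  simp only [Fset, Set.mem_setOf_eq, Set.mem_empty_iff_false, iff_false, not_and]
  intro _ hL
  exact fun _ => h (by rw [← hL]; rfl)

lemma qfun_zero_zero (P : Measure Ω) [IsProbabilityMeasure P] (V : ℤ × ℕ → Ω → Bool)
    (j : ℤ) (n : ℕ) : qfun P V j n 0 0 = 1 := by
  unfold qfun
  rw [tsum_eq_single j (fun a ha => by rw [Fset_zero_ne V j n ha]; simp)]
  rw [show j + ((0:ℕ):ℤ) = j by simp, Fset_zero_self]
  exact measure_univ

lemma qfun_gt (P : Measure Ω) (V : ℤ × ℕ → Ω → Bool) (j : ℤ) (n : ℕ) {t k : ℕ}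
    (h : t < k) : qfun P V j n t k = 0 := by
  unfold qfun
  rw [ENNReal.tsum_eq_zero]
  intro a
  rw [Fset_empty_of_big (by omega)]
  simp

lemma qfun_succ_zero (P : Measure Ω) [IsProbabilityMeasure P] {V : ℤ × ℕ → Ω → Bool}
    (hVmeas : ∀ p, Measurable (V p))
    (hVindep : iIndepFun V P)
    (hVunif : ∀ p, P {ω | V p ω = true} = 1 / 2)
    (j : ℤ) {n t : ℕ} (ht : t < n) :
    qfun P V j n (t + 1) 0
      = (qfun P V j n t 0 + qfun P V j n t 1 + qfun P V j n t 0) * (1 / 4) := by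
  unfold qfun
  have h1 : ∀ a : ℤ, P (Fset V j n (t + 1) a (a + ((0:ℕ):ℤ)))
      = (P (Fset V j n t a (a + ((0:ℕ):ℤ))) + P (Fset V j n t (a + 1) (a + ((0:ℕ):ℤ)))
        + P (Fset V j n t a (a + ((0:ℕ):ℤ) + 1)) + P (Fset V j n t (a + 1) (a + ((0:ℕ):ℤ) + 1)))
        * (1 / 4) := fun a =>
    Fset_succ_measure P hVmeas hVindep hVunif j ht a _ (by simp)
  rw [tsum_congr h1, ENNReal.tsum_mul_right]
  congr 1
  rw [ENNReal.tsum_add, ENNReal.tsum_add, ENNReal.tsum_add]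
  have T2 : ∑' a : ℤ, P (Fset V j n t (a + 1) (a + ((0:ℕ):ℤ))) = 0 := by
    rw [ENNReal.tsum_eq_zero]
    intro a
    rw [Fset_empty_of_not_le (by simp)]
    simp
  have T3 : ∑' a : ℤ, P (Fset V j n t a (a + ((0:ℕ):ℤ) + 1))
      = ∑' a : ℤ, P (Fset V j n t a (a + ((1:ℕ):ℤ))) := by
    apply tsum_congr; intro a; congr 1; push_cast; ring
  have T4 : ∑' a : ℤ, P (Fset V j n t (a + 1) (a + ((0:ℕ):ℤ) + 1))
      = ∑' a : ℤ, P (Fset V j n t a (a + ((0:ℕ):ℤ))) := by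
    rw [← tsum_shift (fun b => P (Fset V j n t b (b + ((0:ℕ):ℤ))))]
    apply tsum_congr; intro a; congr 2; push_cast; ring
  rw [T2, T3, T4]
  ring

lemma qfun_succ_pos (P : Measure Ω) [IsProbabilityMeasure P] {V : ℤ × ℕ → Ω → Bool}
    (hVmeas : ∀ p, Measurable (V p))
    (hVindep : iIndepFun V P)
    (hVunif : ∀ p, P {ω | V p ω = true} = 1 / 2)
    (j : ℤ) {n t : ℕ} (ht : t < n) (k : ℕ) :
    qfun P V j n (t + 1) (k + 1)
      = (qfun P V j n t (k + 1) + qfun P V j n t k + qfun P V j n t (k + 2)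
        + qfun P V j n t (k + 1)) * (1 / 4) := by
  unfold qfun
  have h1 : ∀ a : ℤ, P (Fset V j n (t + 1) a (a + ((k+1:ℕ):ℤ)))
      = (P (Fset V j n t a (a + ((k+1:ℕ):ℤ))) + P (Fset V j n t (a + 1) (a + ((k+1:ℕ):ℤ)))
        + P (Fset V j n t a (a + ((k+1:ℕ):ℤ) + 1)) + P (Fset V j n t (a + 1) (a + ((k+1:ℕ):ℤ) + 1)))
        * (1 / 4) := fun a =>
    Fset_succ_measure P hVmeas hVindep hVunif j ht a _ (by omega)
  rw [tsum_congr h1, ENNReal.tsum_mul_right]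
  congr 1
  rw [ENNReal.tsum_add, ENNReal.tsum_add, ENNReal.tsum_add]
  have T2 : ∑' a : ℤ, P (Fset V j n t (a + 1) (a + ((k+1:ℕ):ℤ)))
      = ∑' a : ℤ, P (Fset V j n t a (a + ((k:ℕ):ℤ))) := by
    rw [← tsum_shift (fun b => P (Fset V j n t b (b + ((k:ℕ):ℤ))))]
    apply tsum_congr; intro a; congr 2; push_cast; ring
  have T3 : ∑' a : ℤ, P (Fset V j n t a (a + ((k+1:ℕ):ℤ) + 1))
      = ∑' a : ℤ, P (Fset V j n t a (a + ((k+2:ℕ):ℤ))) := by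
    apply tsum_congr; intro a; congr 1; push_cast; ring
  have T4 : ∑' a : ℤ, P (Fset V j n t (a + 1) (a + ((k+1:ℕ):ℤ) + 1))
      = ∑' a : ℤ, P (Fset V j n t a (a + ((k+1:ℕ):ℤ))) := by
    rw [← tsum_shift (fun b => P (Fset V j n t b (b + ((k+1:ℕ):ℤ))))]
    apply tsum_congr; intro a; congr 2; push_cast; ring
  rw [T2, T3, T4]

end Core3

lemma modelB_step {y u : ℤ → Bool} {i : ℤ} (h : modelB y u i = true) :
    (y i = true ∧ u i = true) ∨ (y (i - 1) = true ∧ u (i - 1) = false) := by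
  unfold modelB at h
  rcases h1 : y (i - 1) <;> rcases h2 : y i <;> rw [h1, h2] at h <;>
    rcases h3 : u (i - 1) <;> rcases h4 : u i <;> rw [h3] at h <;> first
      | (rw [h4] at h; simp_all)
      | simp_all

/-- The witness lemma: if the `B`-configuration has `•` at site `j` at time `n`, then at every
earlier time `n - t` there is a `•` inside the exploration interval. -/
lemma lrW_witness (j : ℤ) (n : ℕ) (u : ℤ × ℕ → Bool) (Y : ℕ → ℤ → Bool)
    (hY : ∀ m, Y (m + 1) = modelB (Y m) (fun i => u (i, m)))
    (h0 : Y n j = true) :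
    ∀ t, t ≤ n → ∃ i : ℤ, (lrW j n u t).1 ≤ i ∧ i ≤ (lrW j n u t).2 ∧ Y (n - t) i = true := by
  intro t
  induction t with
  | zero => intro _; exact ⟨j, le_rfl, le_rfl, by simpa using h0⟩
  | succ t ih =>
    intro ht
    obtain ⟨i, hli, hir, hYi⟩ := ih (by omega)
    have hnt : n - t = (n - (t + 1)) + 1 := by omega
    rw [hnt, hY (n - (t + 1))] at hYi
    have hrow : n - (t + 1) = n - 1 - t := by omega
    obtain ⟨hYw, hu⟩ | ⟨hYw, hu⟩ := modelB_step hYi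
    · -- witness stays at i ; u (i, m) = true
      refine ⟨i, ?_, ?_, hYw⟩
      · simp only [lrW]; split <;> omega
      · simp only [lrW]
        rcases eq_or_lt_of_le hir with he | hlt
        · rw [hrow] at hu
          rw [he] at hu ⊢
          rw [hu]
          simp
        · split <;> omega
    · -- witness moves to i - 1 ; u (i - 1, m) = false
      refine ⟨i - 1, ?_, ?_, hYw⟩
      · simp only [lrW]
        rcases eq_or_lt_of_le hli with he | hlt
        · rw [hrow] at hu
          rw [← he] at hu
          rw [hu]
          simp only [Bool.false_eq_true, if_false]
          omega
        · split <;> omega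
      · simp only [lrW]; split <;> omega

lemma modelA_to_modelB (x u : ℤ → Bool) (i : ℤ) :
    (modelA x u (i - 1) == modelA x u i) = modelB (fun i' => x (i' - 1) == x i') u i := by
  show (modelA x u (i-1) == modelA x u i)
      = modelB (fun i' => x (i' - 1) == x i') u i
  unfold modelA modelB
  simp only []
  rcases ha : x (i - 1 - 1) <;> rcases hb : x (i - 1) <;> rcases hc : x i <;>
    rcases h1 : u (i - 1) <;> rcases h2 : u i <;>
      simp [ha, hb, hc, h1, h2]


section Final
variable {Ω : Type*} [MeasurableSpace Ω]

lemma qfun_le (P : Measure Ω) [IsProbabilityMeasure P] {V : ℤ × ℕ → Ω → Bool}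
    (hVmeas : ∀ p, Measurable (V p))
    (hVindep : iIndepFun V P)
    (hVunif : ∀ p, P {ω | V p ω = true} = 1 / 2)
    (j : ℤ) (n : ℕ) :
    ∀ t, t ≤ n → ∀ k : ℕ, 4 ^ t * qfun P V j n t k ≤ (Nw t k : ℝ≥0∞) := by
  have h4 : (4 : ℝ≥0∞) * (1 / 4) = 1 := by
    rw [mul_one_div, ENNReal.div_self (by norm_num) (by norm_num)]
  intro t
  induction t with
  | zero =>
    intro _ k
    cases k with
    | zero => rw [qfun_zero_zero P V j n]; simp [Nw_zero_zero]
    | succ k => rw [qfun_gt P V j n (by omega)]; simp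
  | succ t ih =>
    intro ht k
    have ht' : t < n := by omega
    have ihle := ih (by omega)
    cases k with
    | zero =>
      rw [qfun_succ_zero P hVmeas hVindep hVunif j ht']
      have hrw : (4:ℝ≥0∞) ^ (t+1) * ((qfun P V j n t 0 + qfun P V j n t 1 + qfun P V j n t 0) * (1/4))
          = 4^t * qfun P V j n t 0 + 4^t * qfun P V j n t 1 + 4^t * qfun P V j n t 0 := by
        rw [pow_succ]
        calc (4:ℝ≥0∞)^t * 4 * ((qfun P V j n t 0 + qfun P V j n t 1 + qfun P V j n t 0) * (1/4))
            = (4^t * qfun P V j n t 0 + 4^t * qfun P V j n t 1 + 4^t * qfun P V j n t 0) * (4 * (1/4)) := by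
              ring
          _ = _ := by rw [h4, mul_one]
      rw [hrw]
      calc 4^t * qfun P V j n t 0 + 4^t * qfun P V j n t 1 + 4^t * qfun P V j n t 0
          ≤ (Nw t 0 : ℝ≥0∞) + (Nw t 1 : ℝ≥0∞) + (Nw t 0 : ℝ≥0∞) :=
            add_le_add (add_le_add (ihle 0) (ihle 1)) (ihle 0)
        _ = ((2 * Nw t 0 + Nw t 1 : ℕ) : ℝ≥0∞) := by push_cast; ring
        _ = ((Nw (t+1) 0 : ℕ) : ℝ≥0∞) := by rw [Nw_step_zero]
    | succ k =>
      rw [qfun_succ_pos P hVmeas hVindep hVunif j ht' k]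
      have hrw : (4:ℝ≥0∞) ^ (t+1) * ((qfun P V j n t (k+1) + qfun P V j n t k + qfun P V j n t (k+2)
            + qfun P V j n t (k+1)) * (1/4))
          = 4^t * qfun P V j n t (k+1) + 4^t * qfun P V j n t k + 4^t * qfun P V j n t (k+2)
            + 4^t * qfun P V j n t (k+1) := by
        rw [pow_succ]
        calc (4:ℝ≥0∞)^t * 4 * ((qfun P V j n t (k+1) + qfun P V j n t k + qfun P V j n t (k+2)
              + qfun P V j n t (k+1)) * (1/4))
            = (4^t * qfun P V j n t (k+1) + 4^t * qfun P V j n t k + 4^t * qfun P V j n t (k+2)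
              + 4^t * qfun P V j n t (k+1)) * (4 * (1/4)) := by ring
          _ = _ := by rw [h4, mul_one]
      rw [hrw]
      calc 4^t * qfun P V j n t (k+1) + 4^t * qfun P V j n t k + 4^t * qfun P V j n t (k+2)
            + 4^t * qfun P V j n t (k+1)
          ≤ (Nw t (k+1) : ℝ≥0∞) + (Nw t k : ℝ≥0∞) + (Nw t (k+2) : ℝ≥0∞) + (Nw t (k+1) : ℝ≥0∞) :=
            add_le_add (add_le_add (add_le_add (ihle (k+1)) (ihle k)) (ihle (k+2))) (ihle (k+1))
        _ = ((Nw t k + 2 * Nw t (k+1) + Nw t (k+2) : ℕ) : ℝ≥0∞) := by push_cast; ring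
        _ = ((Nw (t+1) (k+1) : ℕ) : ℝ≥0∞) := by rw [Nw_step_pos]

/-- The core bound for model B. -/
theorem coreB (P : Measure Ω) [IsProbabilityMeasure P]
    (V : ℤ × ℕ → Ω → Bool) (hVmeas : ∀ p, Measurable (V p))
    (hVindep : iIndepFun V P)
    (hVunif : ∀ p, P {ω | V p ω = true} = 1 / 2)
    (Y : ℕ → Ω → ℤ → Bool)
    (hY : ∀ m ω, Y (m + 1) ω = modelB (Y m ω) (fun i => V (i, m) ω))
    (n : ℕ) (j : ℤ) :
    P {ω | Y n ω j = true} ≤ (Nat.choose (2 * n + 1) n : ENNReal) / 4 ^ n := by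
  have hsub : {ω | Y n ω j = true} ⊆
      ⋃ k ∈ Finset.range (n + 1), ⋃ a ∈ Finset.Icc (j - n) j, Fset V j n n a (a + (k : ℤ)) := by
    intro ω hω
    have hwit := lrW_witness j n (fun p => V p ω) (fun m => Y m ω) (fun m => by
      funext i; exact congrFun (hY m ω) i) hω
    have hall : ∀ s, s ≤ n → (lrW j n (fun p => V p ω) s).1 ≤ (lrW j n (fun p => V p ω) s).2 := by
      intro s hs
      obtain ⟨i, h1, h2, _⟩ := hwit s hs
      omega
    have hb := lrW_bound j n (fun p => V p ω) n
    have hab : (lrW j n (fun p => V p ω) n).1 ≤ (lrW j n (fun p => V p ω) n).2 := hall n le_rfl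
    simp only [Set.mem_iUnion, Finset.mem_range, Finset.mem_Icc]
    refine ⟨((lrW j n (fun p => V p ω) n).2 - (lrW j n (fun p => V p ω) n).1).toNat,
      by omega, (lrW j n (fun p => V p ω) n).1, ⟨by omega, by omega⟩, hall, rfl, by omega⟩
  calc P {ω | Y n ω j = true}
      ≤ P (⋃ k ∈ Finset.range (n + 1), ⋃ a ∈ Finset.Icc (j - n) j, Fset V j n n a (a + (k : ℤ))) :=
        measure_mono hsub
    _ ≤ ∑ k ∈ Finset.range (n + 1),
          P (⋃ a ∈ Finset.Icc (j - n) j, Fset V j n n a (a + (k : ℤ))) :=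
        measure_biUnion_finset_le _ _
    _ ≤ ∑ k ∈ Finset.range (n + 1), ∑ a ∈ Finset.Icc (j - n) j, P (Fset V j n n a (a + (k : ℤ))) :=
        Finset.sum_le_sum (fun k _ => measure_biUnion_finset_le _ _)
    _ ≤ ∑ k ∈ Finset.range (n + 1), qfun P V j n n k :=
        Finset.sum_le_sum (fun k _ => ENNReal.sum_le_tsum _)
    _ ≤ ∑ k ∈ Finset.range (n + 1), (Nw n k : ℝ≥0∞) / 4 ^ n := by
        refine Finset.sum_le_sum (fun k _ => ?_)
        rw [ENNReal.le_div_iff_mul_le (Or.inl (by positivity)) (Or.inl (ENNReal.pow_ne_top (by norm_num)))]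
        rw [mul_comm]
        exact qfun_le P hVmeas hVindep hVunif j n n le_rfl k
    _ = (Nat.choose (2 * n + 1) n : ENNReal) / 4 ^ n := by
        simp only [div_eq_mul_inv, ← Finset.sum_mul]
        congr 1
        rw [← Nat.cast_sum, Nw_sum]

end Final

/-- upper bound of Proposition 6.1: for every realization of
model B with arbitrary initial distribution (initial configuration independent of the
i.i.d. uniform updates), `P(B_{0,n} = •) ≤ d_n = 4^{-n} C(2n+1,n)`; equivalently, for
every realization of model A with arbitrary initial distribution,
`P(A_{0,n} A_{1,n} ∈ {00,11}) ≤ d_n`. -/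
theorem modelA_modelB_upper_bound {Ω : Type*} [MeasurableSpace Ω] (P : Measure Ω)
    [IsProbabilityMeasure P]
    -- a realization of model B
    (V : ℤ × ℕ → Ω → Bool) (hVmeas : ∀ p, Measurable (V p))
    (hVindep : iIndepFun V P)
    (hVunif : ∀ p, P {ω | V p ω = true} = 1 / 2)
    (Y : ℕ → Ω → ℤ → Bool) (hY0meas : Measurable (Y 0))
    (hYind : IndepFun (Y 0) (fun ω (p : ℤ × ℕ) => V p ω) P)
    (hY : ∀ n ω, Y (n + 1) ω = modelB (Y n ω) (fun i => V (i, n) ω))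
    -- a realization of model A
    (U : ℤ × ℕ → Ω → Bool) (hUmeas : ∀ p, Measurable (U p))
    (hUindep : iIndepFun U P)
    (hUunif : ∀ p, P {ω | U p ω = true} = 1 / 2)
    (A : ℕ → Ω → ℤ → Bool) (hA0meas : Measurable (A 0))
    (hAind : IndepFun (A 0) (fun ω (p : ℤ × ℕ) => U p ω) P)
    (hA : ∀ n ω, A (n + 1) ω = modelA (A n ω) (fun i => U (i, n) ω))
    (n : ℕ) :
    P {ω | Y n ω 0 = true} ≤ (Nat.choose (2 * n + 1) n : ENNReal) / 4 ^ n ∧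
    P {ω | A n ω 0 = A n ω 1} ≤ (Nat.choose (2 * n + 1) n : ENNReal) / 4 ^ n := by
  constructor
  · exact coreB P V hVmeas hVindep hVunif Y hY n 0
  · -- model A: pass to the equality process
    set Y' : ℕ → Ω → ℤ → Bool := fun m ω i => A m ω (i - 1) == A m ω i with hY'
    have hstep : ∀ m ω, Y' (m + 1) ω = modelB (Y' m ω) (fun i => U (i, m) ω) := by
      intro m ω
      funext i
      rw [hY']
      simp only [hA m ω]
      exact modelA_to_modelB (A m ω) (fun i => U (i, m) ω) i
    have hset : {ω | A n ω 0 = A n ω 1} = {ω | Y' n ω 1 = true} := by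
      ext ω
      simp only [Set.mem_setOf_eq, hY']
      rw [show (1:ℤ) - 1 = 0 by ring]
      exact beq_iff_eq.symm
    rw [hset]
    exact coreB P U hUmeas hUindep hUunif Y' hstep n 1
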